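/- Let (gₙ, hₙ) be a framing for F in a Hilbert space H, and let A, B be closed densely defined operators on H with (gₙ) ⊆ dom A and (hₙ) ⊆ dom B. Let D_B ⊆ dom B* be a dense subspace of H. Assume: (1) every f ∈ F lies in dom A* and A*f ∈ F_max; (2) ⟨A*f, B*h⟩ = ⟨f, h⟩ for all f ∈ F, h ∈ D_B. Then for every f ∈ F and h ∈ D_B, ⟨f, h⟩ = lim_{N→∞} ⟨∑_{n≤N} ⟨A*f, gₙ⟩ B hₙ, h⟩. -/

import Mathlib

open scoped ComplexInnerProductSpace

/-- Generating lemma for framings: under the stated conditions on the closed densely defined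
operators `A`, `B`, for every `f ∈ F` and `h ∈ D_B` one has
`⟨f, h⟩ = lim_N ⟨∑_{n≤N} ⟨A*f, gₙ⟩ B hₙ, h⟩`. -/
theorem framing_generating_lemma {H : Type*} [NormedAddCommGroup H] [InnerProductSpace ℂ H]
    [CompleteSpace H] (g h : ℕ → H) (F : Set H) (A B : H →ₗ.[ℂ] H)
    (hAdense : Dense (A.domain : Set H)) (hBdense : Dense (B.domain : Set H))
    (hAclosed : A.IsClosed) (hBclosed : B.IsClosed)
    (hg : ∀ n, g n ∈ A.domain) (hh : ∀ n, h n ∈ B.domain)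
    (DB : Set H) (hDBsub : DB ⊆ B.adjoint.domain) (hDBdense : Dense DB)
    (hF : F ≠ {0})
    (hframe : ∀ f ∈ F, HasSum (fun n => ⟪g n, f⟫ • h n) f)
    (hFdom : ∀ f ∈ F, f ∈ A.adjoint.domain)
    (hFmax : ∀ f (hf : f ∈ F),
      HasSum (fun n => ⟪g n, A.adjoint ⟨f, hFdom f hf⟩⟫ • h n) (A.adjoint ⟨f, hFdom f hf⟩))
    (hAB : ∀ f (hf : f ∈ F), ∀ x (hx : x ∈ DB),
      ⟪B.adjoint ⟨x, hDBsub hx⟩, A.adjoint ⟨f, hFdom f hf⟩⟫ = ⟪x, f⟫) :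
    ∀ f (hf : f ∈ F), ∀ x ∈ DB,
      Filter.Tendsto
        (fun N : ℕ =>
          ⟪x, ∑ n ∈ Finset.range (N + 1),
              ⟪g n, A.adjoint ⟨f, hFdom f hf⟩⟫ • B ⟨h n, hh n⟩⟫)
        Filter.atTop (nhds ⟪x, f⟫) := by
  intro f hf x hx
  set Af := A.adjoint ⟨f, hFdom f hf⟩ with hAf
  set Bx := B.adjoint ⟨x, hDBsub hx⟩ with hBx
  have key : ∀ N : ℕ,
      ⟪x, ∑ n ∈ Finset.range (N + 1), ⟪g n, Af⟫ • B ⟨h n, hh n⟩⟫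
        = ⟪Bx, ∑ n ∈ Finset.range (N + 1), ⟪g n, Af⟫ • h n⟫ := by
    intro N
    rw [inner_sum, inner_sum]
    refine Finset.sum_congr rfl fun n _ => ?_
    rw [inner_smul_right, inner_smul_right]
    congr 1
    exact ((B.adjoint_isFormalAdjoint hBdense) ⟨x, hDBsub hx⟩ ⟨h n, hh n⟩).symm
  simp only [key]
  have hsum := (hFmax f hf).tendsto_sum_nat
  have hlim : Filter.Tendsto (fun N : ℕ => ∑ n ∈ Finset.range (N + 1), ⟪g n, Af⟫ • h n)
      Filter.atTop (nhds Af) :=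
    hsum.comp (Filter.tendsto_add_atTop_nat 1)
  have := Filter.Tendsto.inner (𝕜 := ℂ)
    (tendsto_const_nhds (x := Bx) (f := Filter.atTop (α := ℕ))) hlim
  rwa [hAB f hf x hx] at this
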